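/- Let G be an infinite abelian group and A ⊆ G a weak basis (i.e., ⋃_{i=1}^h iA ∼ G for some positive integer h). Then A is a basis of G (i.e., kA ∼ G for some positive integer k) if and only if the subgroup generated by A − A equals G. -/

import Mathlib

open Pointwise

/-- `itSum A n` is the `n`-fold sumset of `A` (sums of exactly `n` elements of `A`). -/
def itSum {G : Type*} [AddCommGroup G] (A : Set G) : ℕ → Set G
  | 0 => {0}
  | n + 1 => itSum A n + A

/-- `SimEq A B` means the symmetric difference of `A` and `B` is finite. -/
def SimEq {G : Type*} [AddCommGroup G] (A B : Set G) : Prop :=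
  (symmDiff A B).Finite

lemma simEq_univ_iff {G : Type*} [AddCommGroup G] {X : Set G} :
    SimEq X Set.univ ↔ (Xᶜ : Set G).Finite := by
  unfold SimEq
  have : symmDiff X Set.univ = Xᶜ := by
    ext z; simp [Set.symmDiff_def]
  rw [this]

lemma mem_itSum_add {G : Type*} [AddCommGroup G] (A : Set G) :
    ∀ n, ∀ m, ∀ x ∈ itSum A m, ∀ y ∈ itSum A n, x + y ∈ itSum A (m + n) := by
  intro n
  induction n with
  | zero =>
    intro m x hx y hy
    simp only [itSum] at hy
    subst hy
    simpa using hx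
  | succ n ih =>
    intro m x hx y hy
    simp only [itSum] at hy ⊢
    rcases Set.mem_add.mp hy with ⟨y', hy', b, hb, rfl⟩
    have : x + y' ∈ itSum A (m + n) := ih m x hx y' hy'
    rw [← add_assoc]
    exact Set.add_mem_add this hb

lemma mem_itSum_one {G : Type*} [AddCommGroup G] {A : Set G} {a : G} (ha : a ∈ A) :
    a ∈ itSum A 1 := by
  simp only [itSum]
  exact Set.mem_add.mpr ⟨0, rfl, a, ha, by abel⟩

lemma itSum_nonempty {G : Type*} [AddCommGroup G] {A : Set G} {n : ℕ}
    (hne : (itSum A (n + 1)).Nonempty) : A.Nonempty := by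
  rcases hne with ⟨x, hx⟩
  simp only [itSum] at hx
  rcases Set.mem_add.mp hx with ⟨_, _, b, hb, _⟩
  exact ⟨b, hb⟩

lemma diff_mem_closure {G : Type*} [AddCommGroup G] (A : Set G) :
    ∀ k, ∀ x ∈ itSum A k, ∀ y ∈ itSum A k, x - y ∈ AddSubgroup.closure (A - A) := by
  intro k
  induction k with
  | zero =>
    intro x hx y hy
    simp only [itSum, Set.mem_singleton_iff] at hx hy
    subst hx; subst hy
    simpa using AddSubgroup.zero_mem (AddSubgroup.closure (A - A))
  | succ k ih =>
    intro x hx y hy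
    simp only [itSum] at hx hy
    rcases Set.mem_add.mp hx with ⟨x', hx', a, ha, rfl⟩
    rcases Set.mem_add.mp hy with ⟨y', hy', b, hb, rfl⟩
    have h1 : x' - y' ∈ AddSubgroup.closure (A - A) := ih x' hx' y' hy'
    have h2 : a - b ∈ AddSubgroup.closure (A - A) :=
      AddSubgroup.subset_closure (Set.sub_mem_sub ha hb)
    have := AddSubgroup.add_mem _ h1 h2
    convert this using 1
    abel

lemma exists_repr {G : Type*} [AddCommGroup G] (A : Set G) (g : G)
    (hg : g ∈ AddSubgroup.closure (A - A)) :
    ∃ m x y, x ∈ itSum A m ∧ y ∈ itSum A m ∧ x - y = g := by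
  induction hg using AddSubgroup.closure_induction with
  | mem z hz =>
    rcases Set.mem_sub.mp hz with ⟨a, ha, b, hb, rfl⟩
    exact ⟨1, a, b, mem_itSum_one ha, mem_itSum_one hb, rfl⟩
  | zero =>
    exact ⟨0, 0, 0, rfl, rfl, by simp⟩
  | add x y _ _ hx hy =>
    rcases hx with ⟨m1, x1, y1, hx1, hy1, rfl⟩
    rcases hy with ⟨m2, x2, y2, hx2, hy2, rfl⟩
    exact ⟨m1 + m2, x1 + x2, y1 + y2,
      mem_itSum_add A m2 m1 x1 hx1 x2 hx2,
      mem_itSum_add A m2 m1 y1 hy1 y2 hy2, by abel⟩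
  | neg x _ hx =>
    rcases hx with ⟨m, x1, y1, hx1, hy1, rfl⟩
    exact ⟨m, y1, x1, hy1, hx1, by abel⟩

lemma smul_mem_levels {G : Type*} [AddCommGroup G] {A : Set G} {w0 : G} {m : ℕ}
    (hw1 : w0 ∈ itSum A m) (hw2 : w0 ∈ itSum A (m + 1)) :
    ∀ n t, t ≤ n → n • w0 ∈ itSum A (n * m + t) := by
  intro n
  induction n with
  | zero =>
    intro t ht
    interval_cases t
    simp [itSum]
  | succ n ih =>
    intro t ht
    rw [succ_nsmul]
    rcases Nat.lt_or_ge t (n + 1) with h' | h'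
    · have ht' : t ≤ n := Nat.lt_succ_iff.mp h'
      have := mem_itSum_add A m (n * m + t) _ (ih t ht') w0 hw1
      rw [show (n + 1) * m + t = n * m + t + m from by ring]
      exact this
    · have ht' : t = n + 1 := le_antisymm ht h'
      subst ht'
      have := mem_itSum_add A (m + 1) (n * m + n) _ (ih n le_rfl) w0 hw2
      rw [show (n + 1) * m + (n + 1) = n * m + n + (m + 1) from by ring]
      exact this

theorem stmt_3 {G : Type*} [AddCommGroup G] [Infinite G] (A : Set G) (h : ℕ)
    (hh : 1 ≤ h) (hA : SimEq (⋃ i ∈ Finset.Icc 1 h, itSum A i) Set.univ) :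
    (∃ k, 1 ≤ k ∧ SimEq (itSum A k) Set.univ) ↔
      AddSubgroup.closure (A - A) = ⊤ := by
  set S : Set G := ⋃ i ∈ Finset.Icc 1 h, itSum A i with hS
  have hSc : (Sᶜ : Set G).Finite := simEq_univ_iff.mp hA
  constructor
  · rintro ⟨k, -, hk⟩
    set C := itSum A k with hC
    have hCc : (Cᶜ : Set G).Finite := simEq_univ_iff.mp hk
    rw [eq_top_iff]
    intro g _
    have himg : ((fun z => g + z) '' C)ᶜ = (fun z => g + z) '' Cᶜ := by
      ext z
      simp only [Set.mem_compl_iff, Set.mem_image]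
      constructor
      · intro hz
        exact ⟨z - g, fun hc => hz ⟨z - g, hc, by abel⟩, by abel⟩
      · rintro ⟨x, hx, rfl⟩ ⟨x', hx', hxx⟩
        exact hx (by rwa [add_left_cancel hxx] at hx')
    have h2 : ((fun z => g + z) '' C)ᶜ.Finite := by
      rw [himg]; exact hCc.image _
    obtain ⟨z, hzC, hzI⟩ : (C ∩ (fun z => g + z) '' C).Nonempty := by
      rw [Set.nonempty_iff_ne_empty]
      intro hemp
      have hsub : (Set.univ : Set G) ⊆ Cᶜ ∪ ((fun z => g + z) '' C)ᶜ := by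
        intro z _
        by_contra hz
        simp only [Set.mem_union, Set.mem_compl_iff, not_or, not_not] at hz
        have : z ∈ C ∩ (fun z => g + z) '' C := ⟨not_not.mp (by tauto), not_not.mp (by tauto)⟩
        rw [hemp] at this
        exact this
      exact Set.infinite_univ (Set.Finite.subset (hCc.union h2) hsub)
    rcases hzI with ⟨y, hyC, hyz⟩
    rw [eq_sub_of_add_eq hyz]
    exact diff_mem_closure A k z hzC y hyC
  · intro hcl
    -- A is nonempty
    have hSinf : S.Infinite := by
      have := hSc.infinite_compl
      rwa [compl_compl] at this
    obtain ⟨s, hs⟩ := hSinf.nonempty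
    rw [hS] at hs
    simp only [Set.mem_iUnion] at hs
    obtain ⟨i, hi, hsi⟩ := hs
    rw [Finset.mem_Icc] at hi
    obtain ⟨i', rfl⟩ := Nat.exists_eq_add_of_le hi.1
    have hAne : A.Nonempty := itSum_nonempty (n := i') (by
      rw [show i' + 1 = 1 + i' from by ring]; exact ⟨s, hsi⟩)
    obtain ⟨a, ha⟩ := hAne
    -- represent a as a difference of m-fold sums
    obtain ⟨m, x, y, hx, hy, hxy⟩ := exists_repr A a (hcl ▸ AddSubgroup.mem_top a)
    -- x lies in levels m and m+1
    have hx2 : x ∈ itSum A (m + 1) := by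
      have : x = a + y := by rw [← hxy]; abel
      rw [this, show m + 1 = 1 + m from by ring]
      exact mem_itSum_add A m 1 a (mem_itSum_one ha) y hy
    set n := h - 1 with hn
    set w := n • x with hw
    refine ⟨n * m + h, le_trans hh (Nat.le_add_left _ _), ?_⟩
    rw [simEq_univ_iff]
    have hsub : ((itSum A (n * m + h))ᶜ : Set G) ⊆ (fun z => z + w) '' Sᶜ := by
      intro z hz
      refine ⟨z - w, ?_, sub_add_cancel z w⟩
      intro hzw
      apply hz
      rw [hS] at hzw
      simp only [Set.mem_iUnion] at hzw
      obtain ⟨i, hi, hzi⟩ := hzw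
      rw [Finset.mem_Icc] at hi
      have hwlev : w ∈ itSum A (n * m + (h - i)) :=
        smul_mem_levels hx hx2 n (h - i) (by omega)
      have := mem_itSum_add A (n * m + (h - i)) i (z - w) hzi w hwlev
      rw [show i + (n * m + (h - i)) = n * m + h from by omega] at this
      simpa using this
    exact (hSc.image _).subset hsub
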